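/- arXiv:1202.4897 — 2 statements merged into one kernel-verified Lean document; each statement's English description precedes it below -/
import Mathlib

section
/- Let α, β ∈ ℂ with |α| = |β| and αβ ≠ 0, set A = [[0, α], [β, 0]] and Ā = [[0, −conj(β)], [−conj(α), 0]], and let μ ∈ ℂ satisfy μ² = αβ. Then for ω ∈ ℂ, the matrix exp(−2ω·A − 2·conj(ω)·Ā) equals the identity matrix if and only if ωμ − conj(ω)·conj(μ) ∈ πi·ℤ (equivalently, Im(ωμ) ∈ (π/2)·ℤ). -/
open Complex Matrix Real

theorem vacuum_solution_period_criterion (α β μ : ℂ)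
    (hαβ : ‖α‖ = ‖β‖) (hne : α * β ≠ 0) (hμ : μ ^ 2 = α * β)
    (A Abar : Matrix (Fin 2) (Fin 2) ℂ)
    (hA : A = !![0, α; β, 0])
    (hAbar : Abar = !![0, -(starRingEnd ℂ) β; -(starRingEnd ℂ) α, 0])
    (ω : ℂ) :
    NormedSpace.exp ((-2 * ω) • A + (-2 * (starRingEnd ℂ) ω) • Abar) = 1 ↔
      ∃ n : ℤ, ω * μ - (starRingEnd ℂ) ω * (starRingEnd ℂ) μ = (π : ℂ) * Complex.I * n := by
  subst hA hAbar
  set b : ℂ := -2 * ω * α + 2 * (starRingEnd ℂ) ω * (starRingEnd ℂ) β with hbdef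
  have hM : (-2 * ω) • !![0, α; β, 0]
      + (-2 * (starRingEnd ℂ) ω) • !![(0:ℂ), -(starRingEnd ℂ) β; -(starRingEnd ℂ) α, 0]
      = !![0, b; -(starRingEnd ℂ) b, 0] := by
    ext i j
    fin_cases i <;> fin_cases j <;>
      simp [hbdef, _root_.map_add, _root_.map_mul, _root_.map_neg, _root_.map_ofNat, Complex.conj_conj] <;> ring
  set s : ℝ := 2 * (ω * μ).im with hsdef
  have hts : ω * μ - (starRingEnd ℂ) ω * (starRingEnd ℂ) μ = (s : ℂ) * Complex.I := by
    rw [← _root_.map_mul]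
    exact_mod_cast Complex.sub_conj (ω * μ)
  -- algebraic relations
  have h1 : α * (starRingEnd ℂ) α = β * (starRingEnd ℂ) β := by
    rw [Complex.mul_conj, Complex.mul_conj, Complex.normSq_eq_norm_sq, Complex.normSq_eq_norm_sq, hαβ]
  have habs : ‖μ‖ = ‖α‖ := by
    have h := congrArg (‖·‖) hμ
    rw [norm_pow, norm_mul, ← hαβ] at h
    nlinarith [norm_nonneg μ, norm_nonneg α]
  have h2 : μ * (starRingEnd ℂ) μ = α * (starRingEnd ℂ) α := by
    rw [Complex.mul_conj, Complex.mul_conj, Complex.normSq_eq_norm_sq, Complex.normSq_eq_norm_sq, habs]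
  have hμ' : ((starRingEnd ℂ) μ) ^ 2 = (starRingEnd ℂ) α * (starRingEnd ℂ) β := by
    rw [← _root_.map_pow, hμ, _root_.map_mul]
  have key : b * (starRingEnd ℂ) b
      = -4 * (ω * μ - (starRingEnd ℂ) ω * (starRingEnd ℂ) μ) ^ 2 := by
    simp only [hbdef, _root_.map_add, _root_.map_mul, _root_.map_neg, Complex.conj_conj, _root_.map_ofNat]
    linear_combination (-8 * ω * (starRingEnd ℂ) ω) * h2 + (-4 * ω * (starRingEnd ℂ) ω) * h1
      + 4 * ω ^ 2 * hμ + 4 * ((starRingEnd ℂ) ω) ^ 2 * hμ'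
  have key2 : b * (starRingEnd ℂ) b = (((2 * s) ^ 2 : ℝ) : ℂ) := by
    rw [key, hts]
    push_cast
    linear_combination (-4 * (s:ℂ)^2) * Complex.I_sq
  have hnormSq : Complex.normSq b = (2 * s) ^ 2 := by
    have := (Complex.mul_conj b).symm.trans key2
    exact_mod_cast this
  by_cases hs : s = 0
  · -- matrix is zero
    have hb0 : b = 0 := by
      have : Complex.normSq b = 0 := by rw [hnormSq, hs]; ring
      exact Complex.normSq_eq_zero.mp this
    have hM0 : (-2 * ω) • !![0, α; β, 0]
        + (-2 * (starRingEnd ℂ) ω) • !![(0:ℂ), -(starRingEnd ℂ) β; -(starRingEnd ℂ) α, 0]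
        = 0 := by
      rw [hM, hb0]; ext i j; fin_cases i <;> fin_cases j <;> simp
    rw [hM0, NormedSpace.exp_zero]
    simp only [true_iff]
    exact ⟨0, by rw [hts, hs]; simp⟩
  · -- diagonalize
    have hs2 : (2 * (s:ℂ)) ≠ 0 := by
      simp [hs]
    set u : ℂ := b / (2 * s) with hudef
    have hbu : b = (2 * (s:ℂ)) * u := by
      rw [hudef]; exact (mul_div_cancel₀ b hs2).symm
    have hbu' : (starRingEnd ℂ) b = (2 * (s:ℂ)) * (starRingEnd ℂ) u := by
      rw [hbu, _root_.map_mul, _root_.map_mul, Complex.conj_ofReal, _root_.map_ofNat]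
    have hu : u * (starRingEnd ℂ) u = 1 := by
      have h4 : (2 * (s:ℂ)) * (2 * (s:ℂ)) ≠ 0 := mul_ne_zero hs2 hs2
      have : (2 * (s:ℂ)) * (2 * (s:ℂ)) * (u * (starRingEnd ℂ) u)
          = (2 * (s:ℂ)) * (2 * (s:ℂ)) * 1 := by
        rw [mul_one]
        calc (2 * (s:ℂ)) * (2 * (s:ℂ)) * (u * (starRingEnd ℂ) u)
            = ((2 * (s:ℂ)) * u) * ((2 * (s:ℂ)) * (starRingEnd ℂ) u) := by ring
          _ = b * (starRingEnd ℂ) b := by rw [← hbu, ← hbu']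
          _ = (((2 * s) ^ 2 : ℝ) : ℂ) := key2
          _ = (2 * (s:ℂ)) * (2 * (s:ℂ)) := by push_cast; ring
      exact mul_left_cancel₀ h4 this
    have hune : u ≠ 0 := by
      intro h; rw [h] at hu; simp at hu
    set P : Matrix (Fin 2) (Fin 2) ℂ := !![u, u; Complex.I, -Complex.I] with hPdef
    have hPdet : IsUnit P.det := by
      rw [hPdef, Matrix.det_fin_two_of]
      refine isUnit_iff_ne_zero.mpr ?_
      intro h
      apply hune
      have hI : Complex.I ≠ 0 := Complex.I_ne_zero
      have : (-2 * Complex.I) * u = 0 := by linear_combination h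
      rcases mul_eq_zero.mp this with h' | h'
      · exact absurd h' (by simp [hI])
      · exact h'
    have hP : IsUnit P := (Matrix.isUnit_iff_isUnit_det P).mpr hPdet
    set D : Matrix (Fin 2) (Fin 2) ℂ :=
      Matrix.diagonal ![2 * (s:ℂ) * Complex.I, -(2 * (s:ℂ) * Complex.I)] with hDdef
    have hMP : !![0, b; -(starRingEnd ℂ) b, 0] * P = P * D := by
      ext i j
      fin_cases i <;> fin_cases j <;>
        simp [hPdef, hDdef, Matrix.mul_apply, Fin.sum_univ_two, Matrix.diagonal] <;>
        first
          | linear_combination Complex.I * hbu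
          | linear_combination (-Complex.I) * hbu
          | linear_combination (-u) * hbu' + (-2*(s:ℂ)) * hu + (-2*(s:ℂ)) * Complex.I_sq
          | linear_combination u * hbu' + (2*(s:ℂ)) * hu + (2*(s:ℂ)) * Complex.I_sq
          | ring
    have hMD : !![0, b; -(starRingEnd ℂ) b, 0] = P * D * P⁻¹ := by
      calc !![0, b; -(starRingEnd ℂ) b, 0]
          = !![0, b; -(starRingEnd ℂ) b, 0] * (P * P⁻¹) := by
            rw [Matrix.mul_nonsing_inv P hPdet, Matrix.mul_one]
        _ = (!![0, b; -(starRingEnd ℂ) b, 0] * P) * P⁻¹ := by rw [Matrix.mul_assoc]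
        _ = P * D * P⁻¹ := by rw [hMP]
    rw [hM, hMD, Matrix.exp_conj P D hP, hDdef, Matrix.exp_diagonal]
    have hPinv : P⁻¹ * P = 1 := Matrix.nonsing_inv_mul P hPdet
    have hPinv' : P * P⁻¹ = 1 := Matrix.mul_nonsing_inv P hPdet
    have hconj_iff : ∀ X : Matrix (Fin 2) (Fin 2) ℂ, P * X * P⁻¹ = 1 ↔ X = 1 := by
      intro X
      constructor
      · intro h
        have h2' : P⁻¹ * (P * X * P⁻¹) * P = P⁻¹ * 1 * P := by rw [h]
        calc X = 1 * X * 1 := by rw [Matrix.one_mul, Matrix.mul_one]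
          _ = (P⁻¹ * P) * X * (P⁻¹ * P) := by rw [hPinv]
          _ = P⁻¹ * (P * X * P⁻¹) * P := by
              simp only [Matrix.mul_assoc]
          _ = P⁻¹ * 1 * P := h2'
          _ = 1 := by rw [Matrix.mul_one, hPinv]
      · intro h; rw [h, Matrix.mul_one, hPinv']
    rw [hconj_iff]
    have hdiag_iff :
        Matrix.diagonal (NormedSpace.exp ![2 * (s:ℂ) * Complex.I, -(2 * (s:ℂ) * Complex.I)]) = 1
        ↔ Complex.exp (2 * (s:ℂ) * Complex.I) = 1 := by
      constructor
      · intro h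
        have := congrFun (congrFun h 0) 0
        simpa [Matrix.diagonal, Matrix.one_apply, Pi.coe_exp, Complex.exp_eq_exp_ℂ] using this
      · intro h
        have h' : Complex.exp (-(2 * (s:ℂ) * Complex.I)) = 1 := by
          rw [Complex.exp_neg, h]; simp
        ext i j
        fin_cases i <;> fin_cases j <;>
          simp [Matrix.diagonal, Matrix.one_apply, Pi.coe_exp, ← Complex.exp_eq_exp_ℂ, h, h']
    rw [hdiag_iff, Complex.exp_eq_one_iff]
    constructor
    · rintro ⟨n, hn⟩
      refine ⟨n, ?_⟩
      rw [hts]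
      linear_combination (1/2 : ℂ) * hn
    · rintro ⟨n, hn⟩
      refine ⟨n, ?_⟩
      rw [hts] at hn
      linear_combination 2 * hn
end

section
/- Let α, β ∈ ℂ, let p ∈ ℂ with p ≠ 0, let a, b ∈ ℂ and λ ∈ ℝ, and define f : ℂ → ℂ by f(z) = a·e^{2πi·Re(z·conj(p))} + b·e^{−2πi·Re(z·conj(p))}. Then f satisfies Δf + 8|α|²·f + 8α·conj(β)·conj(f) = −4λ·f identically on ℂ if and only if (4π²|p|² − 8|α|² − 4λ)·a = 8α·conj(β)·conj(b) and (4π²|p|² − 8|α|² − 4λ)·b = 8α·conj(β)·conj(a). -/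
open Complex Real

/-- The Laplacian `∂²f/∂x² + ∂²f/∂y²` of a function `f : ℂ → ℂ` of the real
coordinates `x, y` with `z = x + iy`: second derivatives along the directions `1` and `i`. -/
noncomputable def laplacian (f : ℂ → ℂ) (z : ℂ) : ℂ :=
  fderiv ℝ (fun w => fderiv ℝ f w 1) z 1 +
    fderiv ℝ (fun w => fderiv ℝ f w Complex.I) z Complex.I

noncomputable def Mcp (c p : ℂ) : ℂ →L[ℝ] ℂ :=
  c • (Complex.ofRealCLM.comp (Complex.reCLM.comp (ContinuousLinearMap.mul ℝ ℂ ((starRingEnd ℂ) p))))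

lemma Mcp_apply (c p v : ℂ) : Mcp c p v = c * (((v * (starRingEnd ℂ) p).re : ℝ) : ℂ) := by
  simp [Mcp, mul_comm]

noncomputable def gfun (c p : ℂ) (z : ℂ) : ℂ :=
  Complex.exp (c * (((z * (starRingEnd ℂ) p).re : ℝ) : ℂ))

lemma hasFDerivAt_gfun (c p z : ℂ) :
    HasFDerivAt (gfun c p) (gfun c p z • Mcp c p) z := by
  have h := ((Mcp c p).hasFDerivAt (x := z)).cexp
  have hfn : (fun x : ℂ => Complex.exp (Mcp c p x)) = gfun c p := by
    funext v; rw [Mcp_apply]; rfl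
  have hz : Complex.exp (Mcp c p z) = gfun c p z := by rw [Mcp_apply]; rfl
  rw [hfn, hz] at h; exact h

noncomputable def Ffun (a b c₁ c₂ p : ℂ) (z : ℂ) : ℂ := a * gfun c₁ p z + b * gfun c₂ p z

lemma hasFDerivAt_Ffun (a b c₁ c₂ p z : ℂ) :
    HasFDerivAt (Ffun a b c₁ c₂ p)
      (a • (gfun c₁ p z • Mcp c₁ p) + b • (gfun c₂ p z • Mcp c₂ p)) z :=
  ((hasFDerivAt_gfun c₁ p z).const_mul a).add ((hasFDerivAt_gfun c₂ p z).const_mul b)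

lemma fderiv_Ffun (a b c₁ c₂ p z v : ℂ) :
    fderiv ℝ (Ffun a b c₁ c₂ p) z v =
      (a * (c₁ * (((v * (starRingEnd ℂ) p).re : ℝ) : ℂ))) * gfun c₁ p z +
      (b * (c₂ * (((v * (starRingEnd ℂ) p).re : ℝ) : ℂ))) * gfun c₂ p z := by
  rw [(hasFDerivAt_Ffun a b c₁ c₂ p z).fderiv]
  simp only [ContinuousLinearMap.add_apply, ContinuousLinearMap.smul_apply, smul_eq_mul,
    Mcp_apply]
  ring

lemma second_deriv_Ffun (a b c₁ c₂ p z v : ℂ) :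
    fderiv ℝ (fun w => fderiv ℝ (Ffun a b c₁ c₂ p) w v) z v =
      (a * (c₁ * (((v * (starRingEnd ℂ) p).re : ℝ) : ℂ)) ^ 2) * gfun c₁ p z +
      (b * (c₂ * (((v * (starRingEnd ℂ) p).re : ℝ) : ℂ)) ^ 2) * gfun c₂ p z := by
  set rv : ℂ := (((v * (starRingEnd ℂ) p).re : ℝ) : ℂ)
  have h : (fun w => fderiv ℝ (Ffun a b c₁ c₂ p) w v)
      = Ffun (a * (c₁ * rv)) (b * (c₂ * rv)) c₁ c₂ p := by
    funext w; rw [fderiv_Ffun]; rfl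
  rw [h, fderiv_Ffun]; ring

lemma laplacian_Ffun (a b c₁ c₂ p z : ℂ) :
    laplacian (Ffun a b c₁ c₂ p) z =
      (a * c₁ ^ 2 * ((‖p‖ : ℝ) : ℂ) ^ 2) * gfun c₁ p z +
      (b * c₂ ^ 2 * ((‖p‖ : ℝ) : ℂ) ^ 2) * gfun c₂ p z := by
  have h1 : (((1 : ℂ) * (starRingEnd ℂ) p).re : ℝ) = p.re := by simp
  have hI : ((Complex.I * (starRingEnd ℂ) p).re : ℝ) = p.im := by simp
  have habs : ((‖p‖ : ℝ) : ℂ) ^ 2 = (p.re : ℂ) ^ 2 + (p.im : ℂ) ^ 2 := by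
    have h : (‖p‖) ^ 2 = p.re ^ 2 + p.im ^ 2 := by
      rw [Complex.sq_norm, Complex.normSq_apply]; ring
    exact_mod_cast h
  unfold laplacian
  rw [second_deriv_Ffun, second_deriv_Ffun, h1, hI, habs]
  ring

lemma conj_gfun (c p z : ℂ) :
    (starRingEnd ℂ) (gfun c p z) = gfun ((starRingEnd ℂ) c) p z := by
  rw [gfun, gfun, ← Complex.exp_conj, map_mul, Complex.conj_ofReal]

lemma gfun_zero (c p : ℂ) : gfun c p 0 = 1 := by simp [gfun]


theorem jacobi_eigen_equation_fourier_mode (α β p : ℂ) (hp : p ≠ 0) (a b : ℂ) (lam : ℝ)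
    (f : ℂ → ℂ)
    (hf : ∀ z : ℂ, f z =
      a * Complex.exp (2 * (π : ℂ) * Complex.I * ((z * (starRingEnd ℂ) p).re : ℂ)) +
        b * Complex.exp (-(2 * (π : ℂ) * Complex.I * ((z * (starRingEnd ℂ) p).re : ℂ)))) :
    (∀ z : ℂ,
        laplacian f z + 8 * (‖α‖ : ℂ) ^ 2 * f z +
            8 * α * (starRingEnd ℂ) β * (starRingEnd ℂ) (f z) =
          -4 * (lam : ℂ) * f z) ↔
      ((4 * (π : ℂ) ^ 2 * (‖p‖ : ℂ) ^ 2 - 8 * (‖α‖ : ℂ) ^ 2 - 4 * (lam : ℂ)) * a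
          = 8 * α * (starRingEnd ℂ) β * (starRingEnd ℂ) b ∧
        (4 * (π : ℂ) ^ 2 * (‖p‖ : ℂ) ^ 2 - 8 * (‖α‖ : ℂ) ^ 2 - 4 * (lam : ℂ)) * b
          = 8 * α * (starRingEnd ℂ) β * (starRingEnd ℂ) a) := by
  have hfF : f = Ffun a b (2 * (π : ℂ) * Complex.I) (-(2 * (π : ℂ) * Complex.I)) p := by
    funext z
    rw [hf z]
    simp only [Ffun, gfun, neg_mul]
  subst hfF
  have hc1sq : (2 * (π : ℂ) * Complex.I) ^ 2 = -(4 * (π : ℂ) ^ 2) := by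
    rw [mul_pow, Complex.I_sq]; ring
  have hc2sq : (-(2 * (π : ℂ) * Complex.I)) ^ 2 = -(4 * (π : ℂ) ^ 2) := by
    rw [neg_sq, hc1sq]
  have hcc1 : (starRingEnd ℂ) (2 * (π : ℂ) * Complex.I) = -(2 * (π : ℂ) * Complex.I) := by
    rw [map_mul, map_mul, Complex.conj_I, Complex.conj_ofReal, map_ofNat]
    ring
  have hcc2 : (starRingEnd ℂ) (-(2 * (π : ℂ) * Complex.I)) = 2 * (π : ℂ) * Complex.I := by
    rw [map_neg, hcc1, neg_neg]
  have hconj : ∀ z : ℂ,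
      (starRingEnd ℂ) (Ffun a b (2 * (π : ℂ) * Complex.I) (-(2 * (π : ℂ) * Complex.I)) p z) =
        (starRingEnd ℂ) a * gfun (-(2 * (π : ℂ) * Complex.I)) p z +
        (starRingEnd ℂ) b * gfun (2 * (π : ℂ) * Complex.I) p z := by
    intro z
    simp only [Ffun, map_add, map_mul, conj_gfun, hcc1, hcc2]
  have hns : Complex.normSq p ≠ 0 := by simpa using hp
  set z₀ : ℂ := (((4 * Complex.normSq p)⁻¹ : ℝ) : ℂ) * p with hz₀
  have hr0 : ((z₀ * (starRingEnd ℂ) p).re : ℝ) = 4⁻¹ := by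
    have h : z₀ * (starRingEnd ℂ) p = ((((4 * Complex.normSq p)⁻¹ * Complex.normSq p : ℝ)) : ℂ) := by
      rw [hz₀, mul_assoc, Complex.mul_conj]; push_cast; ring
    rw [h, Complex.ofReal_re]
    field_simp
  have hE1 : gfun (2 * (π : ℂ) * Complex.I) p z₀ = Complex.I := by
    rw [gfun, hr0]
    have h : (2 * (π : ℂ) * Complex.I) * ((4⁻¹ : ℝ) : ℂ) = ((π : ℂ) / 2) * Complex.I := by
      push_cast; ring
    rw [h, Complex.exp_mul_I, Complex.cos_pi_div_two, Complex.sin_pi_div_two]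
    ring
  have hE2 : gfun (-(2 * (π : ℂ) * Complex.I)) p z₀ = -Complex.I := by
    rw [gfun, hr0]
    have h : (-(2 * (π : ℂ) * Complex.I)) * ((4⁻¹ : ℝ) : ℂ) = (-((π : ℂ) / 2)) * Complex.I := by
      push_cast; ring
    rw [h, Complex.exp_mul_I, Complex.cos_neg, Complex.sin_neg, Complex.cos_pi_div_two,
      Complex.sin_pi_div_two]
    ring
  constructor
  · intro h
    have h0 := h 0
    have h1 := h z₀
    rw [laplacian_Ffun, hconj, hc1sq, hc2sq, gfun_zero, gfun_zero] at h0
    rw [laplacian_Ffun, hconj, hc1sq, hc2sq, hE1, hE2] at h1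
    simp only [Ffun, gfun_zero, hE1, hE2] at h0 h1
    have h1' : (-(4 * (π : ℂ) ^ 2 * (‖p‖ : ℂ) ^ 2) + 8 * (‖α‖ : ℂ) ^ 2
          + 4 * (lam : ℂ)) * (a - b) +
        8 * α * (starRingEnd ℂ) β * ((starRingEnd ℂ) b - (starRingEnd ℂ) a) = 0 := by
      linear_combination (-Complex.I) * h1 +
        ((-(4 * (π : ℂ) ^ 2 * (‖p‖ : ℂ) ^ 2) + 8 * (‖α‖ : ℂ) ^ 2
          + 4 * (lam : ℂ)) * (a - b) +
        8 * α * (starRingEnd ℂ) β * ((starRingEnd ℂ) b - (starRingEnd ℂ) a)) * Complex.I_sq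
    constructor
    · linear_combination (-(1/2 : ℂ)) * h0 + (-(1/2 : ℂ)) * h1'
    · linear_combination (-(1/2 : ℂ)) * h0 + ((1/2 : ℂ)) * h1'
  · rintro ⟨h1, h2⟩ z
    rw [laplacian_Ffun, hconj, hc1sq, hc2sq]
    simp only [Ffun]
    linear_combination (-(gfun (2 * (π : ℂ) * Complex.I) p z)) * h1 +
      (-(gfun (-(2 * (π : ℂ) * Complex.I)) p z)) * h2
end
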